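/- Let φ₀ : ℝ × ℤ × ℤ → Mat(m×m, ℂ) be entrywise differentiable in t and satisfy (φ₀_{,1} − φ₀)_t = (φ₀_{,2} − φ₀)(φ₀_{,1} − φ₀ + I) − (φ₀_{,1} − φ₀ + I)(φ₀_{,2} − φ₀)_{,1,-2}. Let P, Q be constant n×n complex matrices and ω̃ a constant n×n matrix with Q ω̃ = ω̃ P (so that γ₁ := ω̃ P − Q ω̃ = 0 and γ₂ := −ω̃_t = 0). Let θ (m×n) and η (n×m) be entrywise differentiable in t and satisfy (θ_{,1} + θ P)_{,2} = −θ_{,1} − (φ₀_{,1} − φ₀)_{,2} θ_{,1}, θ_t = θ_{,2} + (φ₀_{,2} − φ₀) θ, (η + Q η_{,1})_{,-2} = −η − η (φ₀_{,1} − φ₀), and η_t = −η_{,-2} − η (φ₀_{,2} − φ₀). Let Ω̃ be an invertible n×n matrix function, entrywise differentiable in t, satisfying Ω̃_{,2} − Ω̃ = η θ, (Ω̃ P)_{,2} = Q Ω̃_{,1} − η θ_{,1}, and Ω̃_t = η_{,-2} θ. Then φ := φ₀ + θ Ω̃^{-1} η_{,-2} also satisfies (φ_{,1} − φ)_t = (φ_{,2}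 − φ)(φ_{,1} − φ + I) − (φ_{,1} − φ + I)(φ_{,2} − φ)_{,1,-2} (binary Darboux transformation). -/

import Mathlib

open Matrix

attribute [local instance] Matrix.linftyOpNormedRing Matrix.linftyOpNormedAlgebra
  Matrix.linftyOpNormedAddCommGroup Matrix.linftyOpNormedSpace

private lemma matsum {p q : ℕ} (B : Matrix (Fin p) (Fin q) ℂ) :
    B = ∑ a : Fin p, ∑ b : Fin q, (B a b) • single a b 1 := by
  conv_lhs => rw [matrix_eq_sum_single B]
  refine Finset.sum_congr rfl fun a _ => Finset.sum_congr rfl fun b _ => ?_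
  rw [smul_single, smul_eq_mul, mul_one]

private lemma matderiv {p q : ℕ} (B : ℝ → Matrix (Fin p) (Fin q) ℂ)
    (B' : Matrix (Fin p) (Fin q) ℂ) (t : ℝ)
    (h : ∀ a b, HasDerivAt (fun s => B s a b) (B' a b) t) :
    HasDerivAt B B' t := by
  have key : ∀ s, B s = ∑ a : Fin p, ∑ b : Fin q, (B s a b) • single a b 1 :=
    fun s => matsum (B s)
  rw [funext key, matsum B']
  apply HasDerivAt.fun_sum; intro a _
  apply HasDerivAt.fun_sum; intro b _
  exact (h a b).smul_const _

private lemma entryderiv {p q : ℕ} (B : ℝ → Matrix (Fin p) (Fin q) ℂ)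
    (B' : Matrix (Fin p) (Fin q) ℂ) (t : ℝ) (h : HasDerivAt B B' t) (a : Fin p) (b : Fin q) :
    HasDerivAt (fun s => B s a b) (B' a b) t := by
  let l : Matrix (Fin p) (Fin q) ℂ →ₗ[ℝ] ℂ :=
    { toFun := fun M => M a b, map_add' := fun _ _ => rfl, map_smul' := fun _ _ => rfl }
  have hl : Continuous l := LinearMap.continuous_of_finiteDimensional l
  exact (ContinuousLinearMap.hasFDerivAt
    (⟨l, hl⟩ : Matrix (Fin p) (Fin q) ℂ →L[ℝ] ℂ)).comp_hasDerivAt t h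

private lemma invderiv {q : ℕ} (B : ℝ → Matrix (Fin q) (Fin q) ℂ)
    (B' : Matrix (Fin q) (Fin q) ℂ) (t : ℝ) (hinv : ∀ s, IsUnit (B s))
    (h : ∀ a b, HasDerivAt (fun s => B s a b) (B' a b) t) (a b : Fin q) :
    HasDerivAt (fun s => (B s)⁻¹ a b) ((-((B t)⁻¹ * B' * (B t)⁻¹)) a b) t := by
  have hB : HasDerivAt B B' t := matderiv B B' t h
  have hu := hinv t
  have hcoe : (↑hu.unit⁻¹ : Matrix (Fin q) (Fin q) ℂ) = (B t)⁻¹ := by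
    rw [Matrix.nonsing_inv_eq_ringInverse]
    conv_rhs => rw [← hu.unit_spec]
    rw [Ring.inverse_unit]
  have h1 : HasFDerivAt Ring.inverse
      (-ContinuousLinearMap.mulLeftRight ℝ _ ↑hu.unit⁻¹ ↑hu.unit⁻¹) (B t) := by
    have := hasFDerivAt_ringInverse (𝕜 := ℝ) hu.unit
    rwa [hu.unit_spec] at this
  have h2 := h1.comp_hasDerivAt t hB
  have h3 : HasDerivAt (fun s => Ring.inverse (B s))
      (-(((B t)⁻¹ : Matrix (Fin q) (Fin q) ℂ) * B' * (B t)⁻¹)) t := by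
    refine h2.congr_deriv ?_
    simp only [ContinuousLinearMap.neg_apply, ContinuousLinearMap.mulLeftRight_apply, hcoe]
  have h5 := entryderiv _ _ t h3 a b
  have h6 : (fun s => (B s)⁻¹ a b) = (fun s => Ring.inverse (B s) a b) := by
    funext s; rw [Matrix.nonsing_inv_eq_ringInverse]
  rw [h6]
  exact h5

private lemma mulderiv {p q r : ℕ} (f : ℝ → Matrix (Fin p) (Fin q) ℂ)
    (g : ℝ → Matrix (Fin q) (Fin r) ℂ)
    (f' : Matrix (Fin p) (Fin q) ℂ) (g' : Matrix (Fin q) (Fin r) ℂ) (t : ℝ)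
    (hf : ∀ a b, HasDerivAt (fun s => f s a b) (f' a b) t)
    (hg : ∀ a b, HasDerivAt (fun s => g s a b) (g' a b) t) (a : Fin p) (b : Fin r) :
    HasDerivAt (fun s => (f s * g s) a b) ((f' * g t + f t * g') a b) t := by
  simp only [Matrix.mul_apply, Matrix.add_apply]
  rw [← Finset.sum_add_distrib]
  apply HasDerivAt.fun_sum
  intro k _
  exact (hf a k).mul (hg k b)

private lemma sandwich {k : ℕ} (O1 O2 E : Matrix (Fin k) (Fin k) ℂ)
    (h1 : IsUnit O1) (h2 : IsUnit O2) (h : O2 = O1 + E) :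
    O2⁻¹ * E * O1⁻¹ = O1⁻¹ - O2⁻¹ := by
  have d1 := (Matrix.isUnit_iff_isUnit_det _).mp h1
  have d2 := (Matrix.isUnit_iff_isUnit_det _).mp h2
  have hE : E = O2 - O1 := by rw [h]; abel
  rw [hE]
  simp only [Matrix.mul_sub, Matrix.sub_mul, Matrix.mul_assoc,
    Matrix.mul_nonsing_inv _ d1, Matrix.nonsing_inv_mul _ d2, Matrix.mul_one, Matrix.one_mul]

private lemma sandwich2 {k : ℕ} (O1 O2 Pm Qm E : Matrix (Fin k) (Fin k) ℂ)
    (h1 : IsUnit O1) (h2 : IsUnit O2) (h : O2 * Pm = Qm * O1 - E) :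
    O2⁻¹ * E * O1⁻¹ = O2⁻¹ * Qm - Pm * O1⁻¹ := by
  have d1 := (Matrix.isUnit_iff_isUnit_det _).mp h1
  have d2 := (Matrix.isUnit_iff_isUnit_det _).mp h2
  have hE : E = Qm * O1 - O2 * Pm := by rw [h]; abel
  rw [hE]
  simp only [Matrix.mul_sub, Matrix.sub_mul, Matrix.mul_assoc,
    Matrix.mul_nonsing_inv _ d1, Matrix.nonsing_inv_mul_cancel_left _ _ d2, Matrix.mul_one]

/-- binary Darboux transformation for the Miura-dual equation.  With constant
`P, Q, ω̃ (= om)` satisfying `Q ω̃ = ω̃ P` (so `γ₁ = γ₂ = 0`), and `θ, η, Ω̃ (= Om)` solving the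
corresponding linear equations, `φ = φ₀ + θ Ω̃⁻¹ η_{,-2}` again satisfies
`(φ_{,1} − φ)_t = (φ_{,2} − φ)(φ_{,1} − φ + I) − (φ_{,1} − φ + I)(φ_{,2} − φ)_{,1,-2}`. -/
theorem stmt_17 (m n : ℕ)
    (φ₀ φ₀t : ℝ → ℤ → ℤ → Matrix (Fin m) (Fin m) ℂ)
    (hφ₀t : ∀ t j₁ j₂ (a b : Fin m),
      HasDerivAt (fun s => φ₀ s j₁ j₂ a b) (φ₀t t j₁ j₂ a b) t)
    (hseed : ∀ t j₁ j₂,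
      φ₀t t (j₁ + 1) j₂ - φ₀t t j₁ j₂
        = (φ₀ t j₁ (j₂ + 1) - φ₀ t j₁ j₂) * (φ₀ t (j₁ + 1) j₂ - φ₀ t j₁ j₂ + 1)
          - (φ₀ t (j₁ + 1) j₂ - φ₀ t j₁ j₂ + 1)
            * (φ₀ t (j₁ + 1) j₂ - φ₀ t (j₁ + 1) (j₂ - 1)))
    (P Q om : Matrix (Fin n) (Fin n) ℂ)
    (hom : Q * om = om * P)
    (θ θt : ℝ → ℤ → ℤ → Matrix (Fin m) (Fin n) ℂ)
    (hθt : ∀ t j₁ j₂ (a : Fin m) (b : Fin n),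
      HasDerivAt (fun s => θ s j₁ j₂ a b) (θt t j₁ j₂ a b) t)
    (hθ1 : ∀ t j₁ j₂, θ t (j₁ + 1) (j₂ + 1) + θ t j₁ (j₂ + 1) * P
      = -θ t (j₁ + 1) j₂ - (φ₀ t (j₁ + 1) (j₂ + 1) - φ₀ t j₁ (j₂ + 1)) * θ t (j₁ + 1) j₂)
    (hθ2 : ∀ t j₁ j₂, θt t j₁ j₂
      = θ t j₁ (j₂ + 1) + (φ₀ t j₁ (j₂ + 1) - φ₀ t j₁ j₂) * θ t j₁ j₂)
    (η ηt : ℝ → ℤ → ℤ → Matrix (Fin n) (Fin m) ℂ)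
    (hηt : ∀ t j₁ j₂ (a : Fin n) (b : Fin m),
      HasDerivAt (fun s => η s j₁ j₂ a b) (ηt t j₁ j₂ a b) t)
    (hη1 : ∀ t j₁ j₂, η t j₁ (j₂ - 1) + Q * η t (j₁ + 1) (j₂ - 1)
      = -η t j₁ j₂ - η t j₁ j₂ * (φ₀ t (j₁ + 1) j₂ - φ₀ t j₁ j₂))
    (hη2 : ∀ t j₁ j₂, ηt t j₁ j₂
      = -η t j₁ (j₂ - 1) - η t j₁ j₂ * (φ₀ t j₁ (j₂ + 1) - φ₀ t j₁ j₂))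
    (Om Omt : ℝ → ℤ → ℤ → Matrix (Fin n) (Fin n) ℂ)
    (hOminv : ∀ t j₁ j₂, IsUnit (Om t j₁ j₂))
    (hOmt : ∀ t j₁ j₂ (a b : Fin n),
      HasDerivAt (fun s => Om s j₁ j₂ a b) (Omt t j₁ j₂ a b) t)
    (hOm1 : ∀ t j₁ j₂, Om t j₁ (j₂ + 1) - Om t j₁ j₂ = η t j₁ j₂ * θ t j₁ j₂)
    (hOm2 : ∀ t j₁ j₂, Om t j₁ (j₂ + 1) * P
      = Q * Om t (j₁ + 1) j₂ - η t j₁ j₂ * θ t (j₁ + 1) j₂)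
    (hOm3 : ∀ t j₁ j₂, Omt t j₁ j₂ = η t j₁ (j₂ - 1) * θ t j₁ j₂)
    (φ : ℝ → ℤ → ℤ → Matrix (Fin m) (Fin m) ℂ)
    (hφ : ∀ t j₁ j₂, φ t j₁ j₂
      = φ₀ t j₁ j₂ + θ t j₁ j₂ * (Om t j₁ j₂)⁻¹ * η t j₁ (j₂ - 1)) :
    ∀ t j₁ j₂ (a b : Fin m),
      HasDerivAt (fun s => (φ s (j₁ + 1) j₂ - φ s j₁ j₂) a b)
        (((φ t j₁ (j₂ + 1) - φ t j₁ j₂) * (φ t (j₁ + 1) j₂ - φ t j₁ j₂ + 1)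
          - (φ t (j₁ + 1) j₂ - φ t j₁ j₂ + 1)
            * (φ t (j₁ + 1) j₂ - φ t (j₁ + 1) (j₂ - 1)) : Matrix (Fin m) (Fin m) ℂ) a b) t := by
  intro t j₁ j₂ a b
  have H : ∀ (x y : ℤ) (a b : Fin m), HasDerivAt
      (fun s => (φ₀ s x y + θ s x y * (Om s x y)⁻¹ * η s x (y - 1)) a b)
      ((φ₀t t x y +
        ((θt t x y * (Om t x y)⁻¹ +
            θ t x y * -((Om t x y)⁻¹ * Omt t x y * (Om t x y)⁻¹)) * η t x (y - 1) +
          θ t x y * (Om t x y)⁻¹ * ηt t x (y - 1))) a b) t := by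
    intro x y a b
    have hA := invderiv (fun s => Om s x y) (Omt t x y) t (fun s => hOminv s x y)
      (fun a b => hOmt t x y a b)
    have h1 := mulderiv (fun s => θ s x y) (fun s => (Om s x y)⁻¹) (θt t x y)
      (-((Om t x y)⁻¹ * Omt t x y * (Om t x y)⁻¹)) t (fun a b => hθt t x y a b) hA
    have h2 := mulderiv (fun s => θ s x y * (Om s x y)⁻¹) (fun s => η s x (y - 1))
      (θt t x y * (Om t x y)⁻¹ + θ t x y * -((Om t x y)⁻¹ * Omt t x y * (Om t x y)⁻¹))
      (ηt t x (y - 1)) t h1 (fun a b => hηt t x (y - 1) a b)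
    simp only [Matrix.add_apply]
    exact (hφ₀t t x y a b).add (h2 a b)
  have hval :
      (φ t j₁ (j₂ + 1) - φ t j₁ j₂) * (φ t (j₁ + 1) j₂ - φ t j₁ j₂ + 1) -
        (φ t (j₁ + 1) j₂ - φ t j₁ j₂ + 1) * (φ t (j₁ + 1) j₂ - φ t (j₁ + 1) (j₂ - 1)) =
      (φ₀t t (j₁ + 1) j₂ +
        ((θt t (j₁ + 1) j₂ * (Om t (j₁ + 1) j₂)⁻¹ +
            θ t (j₁ + 1) j₂ *
              -((Om t (j₁ + 1) j₂)⁻¹ * Omt t (j₁ + 1) j₂ * (Om t (j₁ + 1) j₂)⁻¹)) *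
              η t (j₁ + 1) (j₂ - 1) +
          θ t (j₁ + 1) j₂ * (Om t (j₁ + 1) j₂)⁻¹ * ηt t (j₁ + 1) (j₂ - 1))) -
      (φ₀t t j₁ j₂ +
        ((θt t j₁ j₂ * (Om t j₁ j₂)⁻¹ +
            θ t j₁ j₂ * -((Om t j₁ j₂)⁻¹ * Omt t j₁ j₂ * (Om t j₁ j₂)⁻¹)) * η t j₁ (j₂ - 1) +
          θ t j₁ j₂ * (Om t j₁ j₂)⁻¹ * ηt t j₁ (j₂ - 1))) := by
    have d00 := hOminv t j₁ j₂
    have d10 := hOminv t (j₁ + 1) j₂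
    have d01 := hOminv t j₁ (j₂ + 1)
    have d1m := hOminv t (j₁ + 1) (j₂ - 1)
    have hZ0 := sub_eq_zero.mpr (hseed t j₁ j₂)
    have hZ1 := sub_eq_zero.mpr (hθ1 t j₁ j₂)
    have hθ1' := hθ1 t j₁ (j₂ - 1)
    rw [show j₂ - 1 + 1 = j₂ from by ring] at hθ1'
    have hZ2 := sub_eq_zero.mpr hθ1'
    have hZ3 := sub_eq_zero.mpr (hη1 t j₁ j₂)
    have hη1' := hη1 t j₁ (j₂ - 1)
    rw [show j₂ - 1 - 1 = j₂ - 2 from by ring] at hη1'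
    have hZ4 := sub_eq_zero.mpr hη1'
    have hZ5 := sub_eq_zero.mpr (sandwich (Om t j₁ j₂) (Om t j₁ (j₂ + 1))
      (η t j₁ j₂ * θ t j₁ j₂) d00 d01 (sub_eq_iff_eq_add'.mp (hOm1 t j₁ j₂)))
    have hOm1' := hOm1 t (j₁ + 1) (j₂ - 1)
    rw [show j₂ - 1 + 1 = j₂ from by ring] at hOm1'
    have hZ6 := sub_eq_zero.mpr (sandwich (Om t (j₁ + 1) (j₂ - 1)) (Om t (j₁ + 1) j₂)
      (η t (j₁ + 1) (j₂ - 1) * θ t (j₁ + 1) (j₂ - 1)) d1m d10 (sub_eq_iff_eq_add'.mp hOm1'))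
    have hZ7 := sub_eq_zero.mpr (sandwich2 (Om t (j₁ + 1) j₂) (Om t j₁ (j₂ + 1)) P Q
      (η t j₁ j₂ * θ t (j₁ + 1) j₂) d10 d01 (hOm2 t j₁ j₂))
    have hOm2' := hOm2 t j₁ (j₂ - 1)
    rw [show j₂ - 1 + 1 = j₂ from by ring] at hOm2'
    have hZ8 := sub_eq_zero.mpr (sandwich2 (Om t (j₁ + 1) (j₂ - 1)) (Om t j₁ j₂) P Q
      (η t j₁ (j₂ - 1) * θ t (j₁ + 1) (j₂ - 1)) d1m d00 hOm2')
    have hη2a := hη2 t (j₁ + 1) (j₂ - 1)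
    rw [show j₂ - 1 - 1 = j₂ - 2 from by ring, show j₂ - 1 + 1 = j₂ from by ring] at hη2a
    have hη2b := hη2 t j₁ (j₂ - 1)
    rw [show j₂ - 1 - 1 = j₂ - 2 from by ring, show j₂ - 1 + 1 = j₂ from by ring] at hη2b
    rw [hφ t j₁ (j₂ + 1), hφ t j₁ j₂, hφ t (j₁ + 1) j₂, hφ t (j₁ + 1) (j₂ - 1)]
    rw [show j₂ + 1 - 1 = j₂ from by ring, show j₂ - 1 - 1 = j₂ - 2 from by ring]
    rw [hθ2 t (j₁ + 1) j₂, hθ2 t j₁ j₂, hOm3 t (j₁ + 1) j₂, hOm3 t j₁ j₂, hη2a, hη2b]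
    rw [← sub_eq_zero]
    calc _ =
        -((φ₀t t (j₁ + 1) j₂ - φ₀t t j₁ j₂) -
            ((φ₀ t j₁ (j₂ + 1) - φ₀ t j₁ j₂) * (φ₀ t (j₁ + 1) j₂ - φ₀ t j₁ j₂ + 1) -
              (φ₀ t (j₁ + 1) j₂ - φ₀ t j₁ j₂ + 1) *
                (φ₀ t (j₁ + 1) j₂ - φ₀ t (j₁ + 1) (j₂ - 1))))
        - ((θ t (j₁ + 1) (j₂ + 1) + θ t j₁ (j₂ + 1) * P) -
            (-θ t (j₁ + 1) j₂ -
              (φ₀ t (j₁ + 1) (j₂ + 1) - φ₀ t j₁ (j₂ + 1)) * θ t (j₁ + 1) j₂)) *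
          ((Om t (j₁ + 1) j₂)⁻¹ * η t (j₁ + 1) (j₂ - 1))
        + ((θ t (j₁ + 1) j₂ + θ t j₁ j₂ * P) -
            (-θ t (j₁ + 1) (j₂ - 1) -
              (φ₀ t (j₁ + 1) j₂ - φ₀ t j₁ j₂) * θ t (j₁ + 1) (j₂ - 1))) *
          ((Om t (j₁ + 1) (j₂ - 1))⁻¹ * η t (j₁ + 1) (j₂ - 2))
        + (θ t j₁ (j₂ + 1) * (Om t j₁ (j₂ + 1))⁻¹) *
          ((η t j₁ (j₂ - 1) + Q * η t (j₁ + 1) (j₂ - 1)) -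
            (-η t j₁ j₂ - η t j₁ j₂ * (φ₀ t (j₁ + 1) j₂ - φ₀ t j₁ j₂)))
        - (θ t j₁ j₂ * (Om t j₁ j₂)⁻¹) *
          ((η t j₁ (j₂ - 2) + Q * η t (j₁ + 1) (j₂ - 2)) -
            (-η t j₁ (j₂ - 1) -
              η t j₁ (j₂ - 1) * (φ₀ t (j₁ + 1) (j₂ - 1) - φ₀ t j₁ (j₂ - 1))))
        - θ t j₁ (j₂ + 1) *
          ((Om t j₁ (j₂ + 1))⁻¹ * (η t j₁ j₂ * θ t j₁ j₂) * (Om t j₁ j₂)⁻¹ -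
            ((Om t j₁ j₂)⁻¹ - (Om t j₁ (j₂ + 1))⁻¹)) * η t j₁ (j₂ - 1)
        + θ t (j₁ + 1) j₂ *
          ((Om t (j₁ + 1) j₂)⁻¹ * (η t (j₁ + 1) (j₂ - 1) * θ t (j₁ + 1) (j₂ - 1)) *
              (Om t (j₁ + 1) (j₂ - 1))⁻¹ -
            ((Om t (j₁ + 1) (j₂ - 1))⁻¹ - (Om t (j₁ + 1) j₂)⁻¹)) * η t (j₁ + 1) (j₂ - 2)
        + θ t j₁ (j₂ + 1) *
          ((Om t j₁ (j₂ + 1))⁻¹ * (η t j₁ j₂ * θ t (j₁ + 1) j₂) * (Om t (j₁ + 1) j₂)⁻¹ -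
            ((Om t j₁ (j₂ + 1))⁻¹ * Q - P * (Om t (j₁ + 1) j₂)⁻¹)) * η t (j₁ + 1) (j₂ - 1)
        - θ t j₁ j₂ *
          ((Om t j₁ j₂)⁻¹ * (η t j₁ (j₂ - 1) * θ t (j₁ + 1) (j₂ - 1)) *
              (Om t (j₁ + 1) (j₂ - 1))⁻¹ -
            ((Om t j₁ j₂)⁻¹ * Q - P * (Om t (j₁ + 1) (j₂ - 1))⁻¹)) * η t (j₁ + 1) (j₂ - 2)
        := by
          simp only [Matrix.mul_add, Matrix.add_mul, Matrix.mul_sub, Matrix.sub_mul,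
            Matrix.neg_mul, Matrix.mul_neg, Matrix.mul_assoc, Matrix.mul_one, Matrix.one_mul]
          abel
      _ = 0 := by
          rw [hZ0, hZ1, hZ2, hZ3, hZ4, hZ5, hZ6, hZ7, hZ8]
          simp
  have hfun : (fun s => (φ s (j₁ + 1) j₂ - φ s j₁ j₂) a b) =
      fun s => (φ₀ s (j₁ + 1) j₂ + θ s (j₁ + 1) j₂ * (Om s (j₁ + 1) j₂)⁻¹ *
          η s (j₁ + 1) (j₂ - 1)) a b -
        (φ₀ s j₁ j₂ + θ s j₁ j₂ * (Om s j₁ j₂)⁻¹ * η s j₁ (j₂ - 1)) a b := by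
    funext s
    rw [Matrix.sub_apply, hφ s (j₁ + 1) j₂, hφ s j₁ j₂]
  rw [hfun, hval, Matrix.sub_apply]
  exact (H (j₁ + 1) j₂ a b).sub (H j₁ j₂ a b)
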